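/- Let θ = (k_r) be a lacunary sequence with limsup_r q_r < ∞, where q_r = k_r / k_{r−1}. Then AC_θ ⊆ AC_{σ₁}: if there exists an integer n with (1/h_r) Σ_{m ∈ I_r} |x_m − x_{⟨m,n⟩}| → 0 as r → ∞, then (1/t) Σ_{m=1}^{t} |x_m − x_{⟨m,n⟩}| → 0 as t → ∞. -/

import Mathlib

open Filter Finset

/-- Membership in the lacunary arithmetic convergence space `AC_θ`,
with lacunary sequence given by `k` (blocks `I_r = (k r, k (r+1)]`,
`h_r = k (r+1) - k r`) and witness integer `n`. -/
def ACtheta (k : ℕ → ℕ) (n : ℕ) (x : ℕ → ℝ) : Prop :=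
  Tendsto (fun r => (1 / ((k (r + 1) - k r : ℕ) : ℝ)) *
    ∑ m ∈ Finset.Ioc (k r) (k (r + 1)), |x m - x (Nat.gcd m n)|) atTop (nhds 0)

/-- Membership in the strongly Cesàro arithmetic convergence space `AC_{σ₁}`
with witness integer `n`. -/
def ACsigma (n : ℕ) (x : ℕ → ℝ) : Prop :=
  Tendsto (fun t : ℕ => (1 / (t : ℝ)) *
    ∑ m ∈ Finset.Icc 1 t, |x m - x (Nat.gcd m n)|) atTop (nhds 0)

/-- if `limsup q_r < ∞` then `AC_θ ⊆ AC_{σ₁}`. -/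
theorem ACtheta_subset_ACsigma (k : ℕ → ℕ) (hk : StrictMono k)
    (hkpos : ∀ r, 0 < k r)
    (hh : Tendsto (fun r => (k (r + 1) - k r : ℕ)) atTop atTop)
    (hq : IsBoundedUnder (· ≤ ·) atTop (fun r => ((k (r + 1) : ℝ) / (k r : ℝ))))
    (n : ℕ) (x : ℕ → ℝ) (hx : ACtheta k n x) :
    ACsigma n x := by
  classical
  set y : ℕ → ℝ := fun m => |x m - x (Nat.gcd m n)| with hy
  have hy0 : ∀ m, 0 ≤ y m := fun m => abs_nonneg _
  set S : ℕ → ℝ := fun r => ∑ m ∈ Finset.Ioc (k r) (k (r + 1)), y m with hSdef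
  have hS0 : ∀ r, 0 ≤ S r := fun r => Finset.sum_nonneg fun m _ => hy0 m
  have hkle : ∀ r, k r ≤ k (r + 1) := fun r => (hk (Nat.lt_succ_self r)).le
  have hcast : ∀ r, ((k (r + 1) - k r : ℕ) : ℝ) = (k (r + 1) : ℝ) - (k r : ℝ) := by
    intro r
    exact_mod_cast Nat.cast_sub (hkle r)
  have hkrpos : ∀ r, (0:ℝ) < k r := fun r => by exact_mod_cast hkpos r
  have hhpos : ∀ r, (0:ℝ) < ((k (r + 1) - k r : ℕ) : ℝ) := by
    intro r
    have h1 : 0 < k (r + 1) - k r := Nat.sub_pos_of_lt (hk (Nat.lt_succ_self r))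
    exact_mod_cast h1
  have hxS : Tendsto (fun r => (1 / ((k (r + 1) - k r : ℕ) : ℝ)) * S r) atTop (nhds 0) := hx
  -- telescoping of the block sums
  have htel : ∀ r, ∑ j ∈ Finset.range r, S j = ∑ m ∈ Finset.Ioc (k 0) (k r), y m := by
    intro r
    induction r with
    | zero => simp
    | succ r ih =>
      rw [Finset.sum_range_succ, ih,
        Finset.sum_Ioc_consecutive y (hk.monotone (Nat.zero_le r)) (hkle r)]
  set C : ℝ := ∑ m ∈ Finset.Ioc 0 (k 0), y m with hC
  have hC0 : 0 ≤ C := Finset.sum_nonneg fun m _ => hy0 m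
  have hIcc : ∀ t : ℕ, Finset.Icc 1 t = Finset.Ioc 0 t := by
    intro t
    ext m
    simp only [Finset.mem_Icc, Finset.mem_Ioc]
    omega
  set A : ℕ → ℝ := fun r => (1 / (k r : ℝ)) * (C + ∑ j ∈ Finset.range (r + 1), S j)
    with hA
  have hA0 : ∀ r, 0 ≤ A r := by
    intro r
    apply mul_nonneg (by positivity)
    exact add_nonneg hC0 (Finset.sum_nonneg fun j _ => hS0 j)
  -- key pointwise bound
  have key : ∀ r t : ℕ, k r < t → t ≤ k (r + 1) →
      (1 / (t : ℝ)) * ∑ m ∈ Finset.Icc 1 t, y m ≤ A r := by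
    intro r t h1 h2
    have hsum : ∑ m ∈ Finset.Icc 1 t, y m ≤ C + ∑ j ∈ Finset.range (r + 1), S j := by
      have hsub : ∑ m ∈ Finset.Icc 1 t, y m ≤ ∑ m ∈ Finset.Icc 1 (k (r + 1)), y m :=
        Finset.sum_le_sum_of_subset_of_nonneg
          (Finset.Icc_subset_Icc_right h2) (fun m _ _ => hy0 m)
      have heq : ∑ m ∈ Finset.Icc 1 (k (r + 1)), y m
          = C + ∑ j ∈ Finset.range (r + 1), S j := by
        rw [htel, hC,
          Finset.sum_Ioc_consecutive y (Nat.zero_le (k 0)) (hk.monotone (Nat.zero_le (r + 1))),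
          hIcc]
      linarith
    have hinv : (1:ℝ) / t ≤ 1 / (k r) := by
      apply one_div_le_one_div_of_le (hkrpos r)
      exact_mod_cast h1.le
    calc (1 / (t : ℝ)) * ∑ m ∈ Finset.Icc 1 t, y m
        ≤ (1 / (k r : ℝ)) * (C + ∑ j ∈ Finset.range (r + 1), S j) :=
          mul_le_mul hinv hsum (Finset.sum_nonneg fun m _ => hy0 m) (by positivity)
      _ = A r := rfl
  have hkinf : Tendsto (fun r => (k r : ℝ)) atTop atTop :=
    tendsto_natCast_atTop_atTop.comp hk.tendsto_atTop
  obtain ⟨Q, hQ⟩ := hq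
  rw [Filter.eventually_map] at hQ
  set Q' : ℝ := max Q 1 with hQ'def
  have hQ'pos : (0:ℝ) < Q' := lt_of_lt_of_le one_pos (le_max_right _ _)
  have hQ'bound : ∀ᶠ r in atTop, (k (r + 1) : ℝ) ≤ Q' * k r := by
    filter_upwards [hQ] with r hr
    have h1 : (k (r + 1) : ℝ) / k r ≤ Q' := hr.trans (le_max_left Q 1)
    rw [div_le_iff₀ (hkrpos r)] at h1
    linarith
  -- the averaged bound tends to zero
  have hAtends : Tendsto A atTop (nhds 0) := by
    rw [Metric.tendsto_atTop]
    intro ε hε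
    have hε2Q : 0 < ε / (2 * Q') := by positivity
    obtain ⟨N1, hN1⟩ := (Metric.tendsto_atTop.mp hxS) (ε / (2 * Q')) hε2Q
    obtain ⟨R0, hR0⟩ := eventually_atTop.mp hQ'bound
    set N : ℕ := max N1 R0 with hN
    set D : ℝ := ∑ j ∈ Finset.range N, S j with hD
    have hD0 : 0 ≤ D := Finset.sum_nonneg fun j _ => hS0 j
    have hfrac : Tendsto (fun r => (C + D) / (k r : ℝ)) atTop (nhds 0) :=
      tendsto_const_nhds.div_atTop hkinf
    have hfrac' : ∀ᶠ r in atTop, (C + D) / (k r : ℝ) < ε / 2 :=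
      hfrac.eventually_lt_const (by positivity)
    obtain ⟨R1, hR1⟩ := eventually_atTop.mp hfrac'
    refine ⟨max N R1, fun r hr => ?_⟩
    have hrN : N ≤ r := le_trans (le_max_left _ _) hr
    have hrR1 : R1 ≤ r := le_trans (le_max_right _ _) hr
    have hSj : ∀ j, N ≤ j → S j ≤ (ε / (2 * Q')) * ((k (j + 1) : ℝ) - k j) := by
      intro j hj
      have h1 := hN1 j (le_trans (le_max_left _ _) hj)
      rw [Real.dist_eq, sub_zero,
        abs_of_nonneg (mul_nonneg (by positivity) (hS0 j))] at h1
      have h2 : S j < ((k (j + 1) - k j : ℕ) : ℝ) * (ε / (2 * Q')) := by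
        rwa [one_div, inv_mul_lt_iff₀ (hhpos j)] at h1
      rw [hcast j] at h2
      nlinarith [h2]
    have hsplit : ∑ j ∈ Finset.range (r + 1), S j
        = D + ∑ j ∈ Finset.Ico N (r + 1), S j :=
      (Finset.sum_range_add_sum_Ico S (Nat.le_succ_of_le hrN)).symm
    have htele2 : ∑ j ∈ Finset.Ico N (r + 1), ((k (j + 1) : ℝ) - k j)
        = (k (r + 1) : ℝ) - k N := by
      rw [Finset.sum_Ico_eq_sub _ (Nat.le_succ_of_le hrN),
        Finset.sum_range_sub (fun i => (k i : ℝ)),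
        Finset.sum_range_sub (fun i => (k i : ℝ))]
      ring
    have htail : ∑ j ∈ Finset.Ico N (r + 1), S j
        ≤ (ε / (2 * Q')) * ((k (r + 1) : ℝ) - k N) := by
      calc ∑ j ∈ Finset.Ico N (r + 1), S j
          ≤ ∑ j ∈ Finset.Ico N (r + 1), (ε / (2 * Q')) * ((k (j + 1) : ℝ) - k j) :=
            Finset.sum_le_sum fun j hj => hSj j (Finset.mem_Ico.mp hj).1
        _ = (ε / (2 * Q')) * ((k (r + 1) : ℝ) - k N) := by
            rw [← Finset.mul_sum, htele2]
    have hQb : (k (r + 1) : ℝ) ≤ Q' * k r :=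
      hR0 r (le_trans (le_trans (le_max_right N1 R0) (le_max_left N R1)) hr)
    have htail2 : ∑ j ∈ Finset.Ico N (r + 1), S j ≤ (ε / 2) * k r := by
      have h3 : (ε / (2 * Q')) * ((k (r + 1) : ℝ) - k N)
          ≤ (ε / (2 * Q')) * (Q' * k r) := by
        apply mul_le_mul_of_nonneg_left _ (le_of_lt hε2Q)
        have := (hkrpos N).le
        linarith
      have h4 : (ε / (2 * Q')) * (Q' * k r) = (ε / 2) * k r := by
        field_simp
      linarith
    have hAr : A r ≤ (C + D) / (k r) + ε / 2 := by
      have hle : (1 / (k r : ℝ)) * (C + ∑ j ∈ Finset.range (r + 1), S j)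
          ≤ (1 / (k r : ℝ)) * (C + (D + (ε / 2) * k r)) := by
        apply mul_le_mul_of_nonneg_left _ (by positivity)
        rw [hsplit]
        linarith
      have heq2 : (1 / (k r : ℝ)) * (C + (D + (ε / 2) * k r))
          = (C + D) / (k r) + ε / 2 := by
        have hne : (k r : ℝ) ≠ 0 := (hkrpos r).ne'
        field_simp
        ring
      calc A r = (1 / (k r : ℝ)) * (C + ∑ j ∈ Finset.range (r + 1), S j) := rfl
        _ ≤ (1 / (k r : ℝ)) * (C + (D + (ε / 2) * k r)) := hle
        _ = (C + D) / (k r) + ε / 2 := heq2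
    rw [Real.dist_eq, sub_zero, abs_of_nonneg (hA0 r)]
    have := hR1 r hrR1
    linarith
  -- conclude
  show Tendsto (fun t : ℕ => (1 / (t : ℝ)) * ∑ m ∈ Finset.Icc 1 t, y m) atTop (nhds 0)
  rw [Metric.tendsto_atTop]
  intro ε hε
  obtain ⟨R, hR⟩ := Metric.tendsto_atTop.mp hAtends ε hε
  refine ⟨k R + 1, fun t ht => ?_⟩
  have htR : k R < t := ht
  have hex : ∃ j, t ≤ k j := (hk.tendsto_atTop.eventually_ge_atTop t).exists
  have hj0 : t ≤ k (Nat.find hex) := Nat.find_spec hex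
  have hj0ne : Nat.find hex ≠ 0 := by
    intro h
    rw [h] at hj0
    exact absurd (le_trans hj0 (hk.monotone (Nat.zero_le R))) (not_le.mpr htR)
  obtain ⟨r, hr⟩ := Nat.exists_eq_succ_of_ne_zero hj0ne
  have hklt : k r < t := by
    have h1 : ¬ t ≤ k r := Nat.find_min hex (by omega)
    omega
  have hkle2 : t ≤ k (r + 1) := by
    have h5 : t ≤ k r.succ := by rw [← hr]; exact hj0
    exact h5
  have hrR : R ≤ r := by
    by_contra hcon
    push_neg at hcon
    have h1 : k (r + 1) ≤ k R := hk.monotone hcon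
    omega
  have hbound := key r t hklt hkle2
  have hnn : 0 ≤ (1 / (t : ℝ)) * ∑ m ∈ Finset.Icc 1 t, y m :=
    mul_nonneg (by positivity) (Finset.sum_nonneg fun m _ => hy0 m)
  rw [Real.dist_eq, sub_zero, abs_of_nonneg hnn]
  refine lt_of_le_of_lt hbound ?_
  have h2 := hR r hrR
  rwa [Real.dist_eq, sub_zero, abs_of_nonneg (hA0 r)] at h2
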